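/- arXiv:math/9911100 — 3 statements merged into one kernel-verified Lean document; each statement's English description precedes it below -/
import Mathlib

section
/- For every nonzero pure imaginary octonion l, the kernel of the bilinear form (a,b) ↦ λ(l,a,b) on Im(𝕆) is exactly the one-dimensional span of l, where λ(a,b,c) = ([a,b],c). -/
noncomputable section

/-- The octonions, realized via the Cayley–Dickson construction as pairs of quaternions. -/
abbrev Octo : Type := Quaternion ℝ × Quaternion ℝ

namespace Octo

/-- Octonion multiplication (Cayley–Dickson): `(a,b)(c,d) = (ac - d̄b, da + bc̄)`. -/
def omul (x y : Octo) : Octo :=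
  (x.1 * y.1 - star y.2 * x.2, y.2 * x.1 + x.2 * star y.1)

/-- The octonion unit. -/
def oone : Octo := (1, 0)

/-- Octonion conjugation. -/
def oconj (x : Octo) : Octo := (star x.1, -x.2)

/-- Real part of an octonion. -/
def ore (x : Octo) : ℝ := x.1.re

/-- The standard inner product `(x,y) = re (x * ȳ)`. -/
def oinner (x y : Octo) : ℝ := ore (omul x (oconj y))

/-- An octonion is pure imaginary if `x̄ = -x`. -/
def IsIm (x : Octo) : Prop := oconj x = -x

/-- The commutator `[a,b] = a*b - b*a`. -/
def comm (a b : Octo) : Octo := omul a b - omul b a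

/-- The octonionic vector (cross) product on imaginary octonions: half the commutator. -/
def cross (a b : Octo) : Octo := (1/2 : ℝ) • comm a b

/-- The 3-form `λ(a,b,c) = ([a,b],c)`. -/
def lam (a b c : Octo) : ℝ := oinner (comm a b) c

end Octo

namespace OctoAux

open Octo

lemma isIm_iff (x : Octo) : IsIm x ↔ x.1.re = 0 := by
  constructor
  · intro h
    have h1 := congrArg (fun y => (Prod.fst y).re) h
    simp [IsIm, oconj] at h1 ⊢
    linarith
  · intro h
    show (star x.1, -x.2) = -x
    ext <;> simp [h]

attribute [local simp] Quaternion.re_mul Quaternion.imI_mul Quaternion.imJ_mul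
  Quaternion.imK_mul

lemma comm_isIm (x y : Octo) : IsIm (Octo.comm x y) := by
  rw [isIm_iff]
  obtain ⟨x1, x2⟩ := x
  obtain ⟨y1, y2⟩ := y
  simp only [Octo.comm, omul]
  simp
  ring

lemma oinner_self (x : Octo) :
    oinner x x = x.1.re ^ 2 + x.1.imI ^ 2 + x.1.imJ ^ 2 + x.1.imK ^ 2
      + x.2.re ^ 2 + x.2.imI ^ 2 + x.2.imJ ^ 2 + x.2.imK ^ 2 := by
  obtain ⟨x1, x2⟩ := x
  simp only [oinner, omul, oconj, ore]
  simp
  ring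

lemma eq_zero_of_oinner_self (x : Octo) (h : oinner x x = 0) : x = 0 := by
  rw [oinner_self] at h
  obtain ⟨x1, x2⟩ := x
  simp only at h
  ext <;> simp [Quaternion.re_zero, Quaternion.imI_zero, Quaternion.imJ_zero, Quaternion.imK_zero] <;>
    nlinarith [sq_nonneg x1.re, sq_nonneg x1.imI, sq_nonneg x1.imJ, sq_nonneg x1.imK, sq_nonneg x2.re, sq_nonneg x2.imI, sq_nonneg x2.imJ, sq_nonneg x2.imK]

set_option maxHeartbeats 1000000 in
lemma key (l a : Octo) (hl : l.1.re = 0) (ha : a.1.re = 0) :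
    Octo.comm l (Octo.comm l a) = (4 * oinner a l) • l - (4 * oinner l l) • a := by
  obtain ⟨l1, l2⟩ := l
  obtain ⟨a1, a2⟩ := a
  simp only [Octo.comm, omul, oconj, oinner, ore] at *
  ext <;>
    simp only [Quaternion.re_mul, Quaternion.imI_mul, Quaternion.imJ_mul, Quaternion.imK_mul,
      Quaternion.re_sub, Quaternion.imI_sub, Quaternion.imJ_sub, Quaternion.imK_sub,
      Quaternion.re_add, Quaternion.imI_add, Quaternion.imJ_add, Quaternion.imK_add,
      Quaternion.re_neg, Quaternion.imI_neg, Quaternion.imJ_neg, Quaternion.imK_neg,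
      Quaternion.re_star, Quaternion.imI_star, Quaternion.imJ_star, Quaternion.imK_star,
      Quaternion.re_smul, Quaternion.imI_smul, Quaternion.imJ_smul, Quaternion.imK_smul,
      Prod.fst_sub, Prod.snd_sub, Prod.fst_add, Prod.snd_add, Prod.smul_fst, Prod.smul_snd,
      smul_eq_mul, hl, ha] <;> ring

lemma comm_smul_self (l : Octo) (t : ℝ) : Octo.comm l (t • l) = 0 := by
  obtain ⟨l1, l2⟩ := l
  simp only [Octo.comm, omul]
  ext <;> simp

lemma oinner_zero_left (b : Octo) : oinner 0 b = 0 := by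
  simp [oinner, omul, ore, Quaternion.re_zero]

lemma comm_zero (l : Octo) : Octo.comm l 0 = 0 := by
  simp only [Octo.comm, omul]
  ext <;> simp

end OctoAux

open Octo in
/-- For a nonzero imaginary octonion `l`, the kernel of `(a,b) ↦ λ(l,a,b)` on `Im 𝕆`
is exactly the line spanned by `l`. -/
theorem kernel_of_lambda_contraction (l : Octo) (hl : IsIm l) (hl0 : l ≠ 0)
    (a : Octo) (ha : IsIm a) :
    (∀ b : Octo, IsIm b → lam l a b = 0) ↔ ∃ t : ℝ, a = t • l := by
  constructor
  · intro H
    have hc := H (comm l a) (OctoAux.comm_isIm l a)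
    have hc0 : comm l a = 0 := OctoAux.eq_zero_of_oinner_self _ hc
    have hkey := OctoAux.key l a ((OctoAux.isIm_iff l).1 hl) ((OctoAux.isIm_iff a).1 ha)
    rw [hc0, OctoAux.comm_zero] at hkey
    have hll : oinner l l ≠ 0 := by
      intro h
      exact hl0 (OctoAux.eq_zero_of_oinner_self l h)
    have h4 : (4 : ℝ) * oinner l l ≠ 0 := mul_ne_zero four_ne_zero hll
    have heq : (4 * oinner a l) • l = (4 * oinner l l) • a :=
      sub_eq_zero.mp hkey.symm
    refine ⟨oinner a l / oinner l l, ?_⟩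
    have h2 := congrArg (fun v : Octo => (4 * oinner l l)⁻¹ • v) heq.symm
    simp only [smul_smul] at h2
    rw [inv_mul_cancel₀ h4, one_smul] at h2
    have hsc : (4 * oinner l l)⁻¹ * (4 * oinner a l) = oinner a l / oinner l l := by
      field_simp
    rw [hsc] at h2
    exact h2
  · rintro ⟨t, rfl⟩
    intro b _
    rw [lam, OctoAux.comm_smul_self, OctoAux.oinner_zero_left]

end
end

section
/- The 2-form ω(x,y) = λ(e₀, x, y) on I = e₀^⊥ ∩ Im(𝕆) is nondegenerate, where e₀ is a unit pure imaginary octonion and λ(a,b,c) = ([a,b],c)/2. -/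
noncomputable section

open Octo

lemma isIm_iff (x : Octo) : IsIm x ↔ x.1.re = 0 := by
  constructor
  · intro h
    have := congrArg (fun z : Octo => z.1.re) h
    simp [IsIm, oconj] at this ⊢
    linarith [this]
  · intro h
    unfold IsIm oconj
    ext <;> simp [h]

set_option maxHeartbeats 3000000 in
lemma key_identity (e x : Octo) (he : e.1.re = 0) (hx : x.1.re = 0) :
    oinner (comm e x) (comm e x) = 4 * (oinner e e * oinner x x - oinner x e ^ 2) := by
  unfold Octo.comm
  simp [oinner, omul, oconj, ore, Quaternion.ext_iff, Prod.sub_def, Quaternion.re_mul, Quaternion.imI_mul, Quaternion.imJ_mul, Quaternion.imK_mul, he, hx]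
  ring

set_option maxHeartbeats 1000000 in
lemma comm_orth (e x : Octo) (he : e.1.re = 0) (hx : x.1.re = 0) :
    oinner (comm e x) e = 0 := by
  unfold Octo.comm
  simp [oinner, omul, oconj, ore, Quaternion.ext_iff, Prod.sub_def, Quaternion.re_mul, Quaternion.imI_mul, Quaternion.imJ_mul, Quaternion.imK_mul, he, hx]
  ring

set_option maxHeartbeats 1000000 in
lemma comm_im (e x : Octo) (he : e.1.re = 0) (hx : x.1.re = 0) :
    (comm e x).1.re = 0 := by
  unfold Octo.comm
  simp [omul, oconj, Prod.sub_def, Quaternion.re_mul, he, hx]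
  ring

lemma oinner_self_pos (x : Octo) (hx0 : x ≠ 0) : 0 < oinner x x := by
  obtain ⟨⟨a0, a1, a2, a3⟩, a4, a5, a6, a7⟩ := x
  have hval : oinner (⟨⟨a0,a1,a2,a3⟩,⟨a4,a5,a6,a7⟩⟩ : Octo) (⟨⟨a0,a1,a2,a3⟩,⟨a4,a5,a6,a7⟩⟩ : Octo)
      = a0^2+a1^2+a2^2+a3^2+a4^2+a5^2+a6^2+a7^2 := by
    have h := fun y : Octo => (show oinner y y = y.1.re^2+y.1.imI^2+y.1.imJ^2+y.1.imK^2+y.2.re^2+y.2.imI^2+y.2.imJ^2+y.2.imK^2 by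
      simp [oinner, omul, oconj, ore, Quaternion.re_mul]
      ring)
    exact h _
  rw [hval]
  have hne : a0 ≠ 0 ∨ a1 ≠ 0 ∨ a2 ≠ 0 ∨ a3 ≠ 0 ∨ a4 ≠ 0 ∨ a5 ≠ 0 ∨ a6 ≠ 0 ∨ a7 ≠ 0 := by
    by_contra h
    push_neg at h
    exact hx0 (by obtain ⟨rfl, rfl, rfl, rfl, rfl, rfl, rfl, rfl⟩ := h; rfl)
  rcases hne with h|h|h|h|h|h|h|h <;> positivity

open Octo in
/-- The 2-form `ω(x,y) = λ(e₀,x,y)`, with `λ(a,b,c) = ([a,b],c)/2`, is nondegenerate on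
`I = e₀^⊥ ∩ Im 𝕆`. -/
theorem omega_nondegenerate (e₀ : Octo) (he : IsIm e₀) (hunit : oinner e₀ e₀ = 1)
    (x : Octo) (hx : IsIm x) (hxe : oinner x e₀ = 0) (hx0 : x ≠ 0) :
    ∃ y : Octo, IsIm y ∧ oinner y e₀ = 0 ∧ (1 / 2 : ℝ) * lam e₀ x y ≠ 0 := by
  rw [isIm_iff] at he hx
  refine ⟨comm e₀ x, (isIm_iff _).2 (comm_im e₀ x he hx), comm_orth e₀ x he hx, ?_⟩
  have hpos := oinner_self_pos x hx0
  have hkey := key_identity e₀ x he hx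
  rw [hunit, hxe] at hkey
  unfold Octo.lam
  rw [hkey]
  nlinarith

end
end

section
/- There exists a 4-dimensional subspace L of Im(𝕆) on which the 3-form λ(a,b,c) = ([a,b],c) vanishes identically (e.g., L = span{i, j, l, [k,l]/2} for suitable orthonormal imaginary octonions with k the vector product of i and j). -/
noncomputable section

open Octo in
/-- There exists a 4-dimensional subspace of `Im 𝕆` on which `λ(a,b,c) = ([a,b],c)`
vanishes identically. -/
theorem exists_isotropic_dim_four :
    ∃ L : Submodule ℝ Octo, (∀ x ∈ L, IsIm x) ∧ Module.finrank ℝ L = 4 ∧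
      ∀ a ∈ L, ∀ b ∈ L, ∀ c ∈ L, lam a b c = 0 := by
  refine ⟨LinearMap.range (LinearMap.inr ℝ (Quaternion ℝ) (Quaternion ℝ)), ?_, ?_, ?_⟩
  · rintro x ⟨y, rfl⟩
    simp [IsIm, oconj, Prod.ext_iff]
  · rw [LinearMap.finrank_range_of_inj LinearMap.inr_injective]
    exact Quaternion.finrank_eq_four
  · rintro a ⟨a2, rfl⟩ b ⟨b2, rfl⟩ c ⟨c2, rfl⟩
    simp [lam, oinner, Octo.comm, omul, oconj, ore]
    rfl

end
end
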